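/- arXiv:1704.07579 — 2 statements merged into one kernel-verified Lean document; each statement's English description precedes it below -/
import Mathlib

section
/- Let m ≥ 1 and let q be a prime power with 3 dividing q+1; let F be the field with q elements. Embed GL_1(F) × GL_{2m}(F) into GL_{2m+1}(F) block-diagonally via ι(a, B) = diag(a, B). Let P₀ be a Sylow 3-subgroup of GL_{2m}(F) and let P = ι({1} × P₀). Then P is a Sylow 3-subgroup of GL_{2m+1}(F), and the normalizer of P in GL_{2m+1}(F) equals ι(GL_1(F) × N_{GL_{2m}(F)}(P₀)), i.e. it consists exactly of the block-diagonal matrices diag(a, B) with a ∈ Fˣ and B ∈ N_{GL_{2m}(F)}(P₀). -/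
open scoped Classical
open Matrix

noncomputable section

/-- The block-diagonal matrix `diag(a, B)` of size `(2m+1) × (2m+1)`, with the scalar `a` in
the upper-left corner and the `2m × 2m` matrix `B` in the lower-right block. -/
def embMat (m : ℕ) (F : Type) [Zero F] (a : F) (B : Matrix (Fin (2 * m)) (Fin (2 * m)) F) :
    Matrix (Fin (2 * m + 1)) (Fin (2 * m + 1)) F :=
  Matrix.of fun i j =>
    Fin.cases (Fin.cases a (fun _ => 0) j) (fun i' => Fin.cases 0 (fun j' => B i' j') j) i

instance fact3prime : Fact (Nat.Prime 3) := ⟨by norm_num⟩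

namespace EmbAux
variable {m : ℕ} {F : Type} [Field F]

@[simp] lemma emb00 (a : F) (B : Matrix (Fin (2*m)) (Fin (2*m)) F) : embMat m F a B 0 0 = a := rfl
@[simp] lemma emb0s (a : F) (B : Matrix (Fin (2*m)) (Fin (2*m)) F) (j : Fin (2*m)) :
    embMat m F a B 0 j.succ = 0 := rfl
@[simp] lemma embs0 (a : F) (B : Matrix (Fin (2*m)) (Fin (2*m)) F) (i : Fin (2*m)) :
    embMat m F a B i.succ 0 = 0 := rfl
@[simp] lemma embss (a : F) (B : Matrix (Fin (2*m)) (Fin (2*m)) F) (i j : Fin (2*m)) :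
    embMat m F a B i.succ j.succ = B i j := rfl

lemma emb_mul (a a' : F) (B B' : Matrix (Fin (2*m)) (Fin (2*m)) F) :
    embMat m F a B * embMat m F a' B' = embMat m F (a * a') (B * B') := by
  ext i j
  refine Fin.cases ?_ (fun i' => ?_) i <;> refine Fin.cases ?_ (fun j' => ?_) j <;>
    simp [Matrix.mul_apply, Fin.sum_univ_succ]

lemma emb_one : embMat m F 1 (1 : Matrix (Fin (2*m)) (Fin (2*m)) F) = 1 := by
  ext i j
  refine Fin.cases ?_ (fun i' => ?_) i <;> refine Fin.cases ?_ (fun j' => ?_) j <;>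
    simp [Matrix.one_apply, Fin.succ_ne_zero, (Fin.succ_ne_zero _).symm, Fin.succ_inj]

lemma emb_pow (a : F) (B : Matrix (Fin (2*m)) (Fin (2*m)) F) (k : ℕ) :
    (embMat m F a B) ^ k = embMat m F (a ^ k) (B ^ k) := by
  induction k with
  | zero => simpa using emb_one.symm
  | succ k ih => rw [pow_succ, pow_succ, pow_succ, ih, emb_mul]

lemma emb_inj {a a' : F} {B B' : Matrix (Fin (2*m)) (Fin (2*m)) F}
    (h : embMat m F a B = embMat m F a' B') : a = a' ∧ B = B' := by
  constructor
  · have := congrFun (congrFun h 0) 0; simpa using this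
  · ext i j; have := congrFun (congrFun h i.succ) j.succ; simpa using this

end EmbAux


lemma three_ne_zero'' {F : Type} [Field F] [Fintype F] (hcard : Fintype.card F % 3 = 2) :
    (3 : F) ≠ 0 := by
  intro h
  haveI := ringChar.charP F
  have hd : ringChar F ∣ 3 := ringChar.dvd (by exact_mod_cast h)
  have hp : (ringChar F).Prime := CharP.char_is_prime F (ringChar F)
  have h3 : ringChar F = 3 := (Nat.prime_dvd_prime_iff_eq hp (by norm_num)).mp hd
  obtain ⟨k, -, hk⟩ := FiniteField.card F (ringChar F)
  rw [h3] at hk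
  have hkpos : 0 < (k : ℕ) := k.pos
  have : 3 ∣ Fintype.card F := by rw [hk]; exact dvd_pow_self 3 hkpos.ne'
  omega

/-- The subspace of vectors fixed by all elements of a set of invertible matrices. -/
def fixSub {k : ℕ} {F : Type} [Field F] (Pm : Subgroup (GL (Fin k) F)) :
    Submodule F (Fin k → F) where
  carrier := {u | ∀ B : GL (Fin k) F, B ∈ Pm → (B : Matrix (Fin k) (Fin k) F) *ᵥ u = u}
  add_mem' := by
    intro a b ha hb B hB
    rw [Matrix.mulVec_add, ha B hB, hb B hB]
  zero_mem' := by intro B hB; simp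
  smul_mem' := by
    intro r a ha B hB
    rw [Matrix.mulVec_smul, ha B hB]

@[simp] lemma mem_fixSub {k : ℕ} {F : Type} [Field F] (Pm : Subgroup (GL (Fin k) F))
    (u : Fin k → F) :
    u ∈ fixSub Pm ↔ ∀ B : GL (Fin k) F, B ∈ Pm → (B : Matrix (Fin k) (Fin k) F) *ᵥ u = u :=
  Iff.rfl

lemma sum_mulVec' {k : ℕ} {F : Type} [Field F] {ι : Type} (s : Finset ι)
    (f : ι → Matrix (Fin k) (Fin k) F) (u : Fin k → F) :
    (∑ i ∈ s, f i) *ᵥ u = ∑ i ∈ s, f i *ᵥ u := by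
  induction s using Finset.cons_induction with
  | empty => simp [Matrix.zero_mulVec]
  | cons a s ha ih => rw [Finset.sum_cons, Finset.sum_cons, Matrix.add_mulVec, ih]

lemma vecMul_sum' {k : ℕ} {F : Type} [Field F] {ι : Type} (s : Finset ι)
    (f : ι → Matrix (Fin k) (Fin k) F) (u : Fin k → F) :
    u ᵥ* (∑ i ∈ s, f i) = ∑ i ∈ s, u ᵥ* f i := by
  induction s using Finset.cons_induction with
  | empty => simp [Matrix.vecMul_zero]
  | cons a s ha ih => rw [Finset.sum_cons, Finset.sum_cons, Matrix.vecMul_add, ih]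

section Key

variable {m : ℕ} {F : Type} [Field F] [Fintype F]

lemma fixed_vec_eq_zero (hcard : Fintype.card F % 3 = 2)
    (P₀ : Sylow 3 (GL (Fin (2*m)) F)) (v : Fin (2*m) → F)
    (hv : ∀ B : GL (Fin (2*m)) F, B ∈ P₀ → (B : Matrix (Fin (2*m)) (Fin (2*m)) F) *ᵥ v = v) :
    v = 0 := by
  by_contra hv0
  classical
  set G := GL (Fin (2*m)) F
  set Pm : Subgroup G := ↑P₀ with hPm
  haveI : Fintype ↥Pm := Fintype.ofFinite _
  obtain ⟨kp, hkp⟩ := (IsPGroup.iff_card (p := 3)).mp P₀.isPGroup'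
  have h3F : (3:F) ≠ 0 := three_ne_zero'' hcard
  have hcP : ((Nat.card ↥Pm : F)) ≠ 0 := by
    rw [hPm, hkp]; push_cast; exact pow_ne_zero _ h3F
  set c : F := (Nat.card ↥Pm : F) with hc
  set T : Matrix (Fin (2*m)) (Fin (2*m)) F :=
    ∑ B : ↥Pm, ((B : G) : Matrix (Fin (2*m)) (Fin (2*m)) F) with hT
  have hTleft : ∀ C : ↥Pm, ((C : G) : Matrix (Fin (2*m)) (Fin (2*m)) F) * T = T := by
    intro C
    rw [hT, Finset.mul_sum]
    exact Fintype.sum_equiv (Equiv.mulLeft C) _ _ (fun B => by exact (Units.val_mul _ _).symm)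
  have hTright : ∀ C : ↥Pm, T * ((C : G) : Matrix (Fin (2*m)) (Fin (2*m)) F) = T := by
    intro C
    rw [hT, Finset.sum_mul]
    exact Fintype.sum_equiv (Equiv.mulRight C) _ _ (fun B => by exact (Units.val_mul _ _).symm)
  set W : Submodule F (Fin (2*m) → F) := fixSub Pm with hW
  set K : Submodule F (Fin (2*m) → F) := LinearMap.ker (Matrix.mulVecLin T) with hK
  have hKmem : ∀ u, u ∈ K ↔ T *ᵥ u = 0 := by
    intro u; rw [hK, LinearMap.mem_ker, Matrix.mulVecLin_apply]
  have hWmem : ∀ u, T *ᵥ u ∈ W := by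
    intro u
    rw [hW, mem_fixSub]
    intro B hB
    rw [Matrix.mulVec_mulVec, hTleft ⟨B, hB⟩]
  have hWfix : ∀ u ∈ W, T *ᵥ u = c • u := by
    intro u hu
    rw [hW, mem_fixSub] at hu
    rw [hT, sum_mulVec']
    have : ∀ B : ↥Pm, ((B : G) : Matrix (Fin (2*m)) (Fin (2*m)) F) *ᵥ u = u :=
      fun B => hu B B.2
    rw [Finset.sum_congr rfl (fun B _ => this B), Finset.sum_const, Finset.card_univ,
      ← Nat.card_eq_fintype_card, hc, Nat.cast_smul_eq_nsmul]
  have hWK : ∀ u, u ∈ W → u ∈ K → u = 0 := by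
    intro u h1 h2
    rw [hKmem] at h2
    rw [hWfix u h1] at h2
    exact (smul_eq_zero.mp h2).resolve_left hcP
  have hdecomp : ∀ u, u - c⁻¹ • (T *ᵥ u) ∈ K := by
    intro u
    rw [hKmem, Matrix.mulVec_sub, Matrix.mulVec_smul, hWfix _ (hWmem u), smul_smul,
      inv_mul_cancel₀ hcP, one_smul, sub_self]
  -- action of P₀ on K
  letI : SMul ↥Pm ↥K := ⟨fun B u => ⟨((B : G) : Matrix (Fin (2*m)) (Fin (2*m)) F) *ᵥ u.1, by
    rw [hKmem, Matrix.mulVec_mulVec, hTright B, ← Matrix.mulVecLin_apply, ← LinearMap.mem_ker, ← hK]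
    exact u.2⟩⟩
  have hsmul_def : ∀ (B : ↥Pm) (u : ↥K),
      ((B • u : ↥K) : Fin (2*m) → F) = ((B : G) : Matrix (Fin (2*m)) (Fin (2*m)) F) *ᵥ u.1 :=
    fun B u => rfl
  letI : MulAction ↥Pm ↥K :=
    { one_smul := fun u => Subtype.ext (by rw [hsmul_def]; simp)
      mul_smul := fun B C u => Subtype.ext (by
        rw [hsmul_def, hsmul_def, hsmul_def, Matrix.mulVec_mulVec]; norm_cast) }
  have hfix1 : Nat.card ↑(MulAction.fixedPoints ↥Pm ↥K) = 1 := by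
    rw [Nat.card_eq_one_iff_unique]
    have hzero : ∀ z : ↥K, z ∈ MulAction.fixedPoints ↥Pm ↥K → z = 0 := by
      intro z hz
      rw [MulAction.mem_fixedPoints] at hz
      have hzW : (z : Fin (2*m) → F) ∈ W := by
        rw [hW, mem_fixSub]
        intro B hB
        have := congrArg Subtype.val (hz ⟨B, hB⟩)
        rw [hsmul_def] at this
        exact this
      exact Subtype.ext (hWK _ hzW z.2)
    constructor
    · exact ⟨fun x y => Subtype.ext ((hzero _ x.2).trans (hzero _ y.2).symm)⟩
    · refine ⟨⟨0, ?_⟩⟩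
      rw [MulAction.mem_fixedPoints]
      intro B
      apply Subtype.ext
      rw [hsmul_def]
      simp
  have hmod := P₀.isPGroup'.card_modEq_card_fixedPoints ↥K
  rw [hfix1] at hmod
  -- card K = q ^ dim K
  have hcardK : Nat.card ↥K = Fintype.card F ^ Module.finrank F ↥K := by
    rw [Nat.card_eq_fintype_card]; exact Module.card_eq_pow_finrank
  have heven : Even (Module.finrank F ↥K) := by
    by_contra hodd
    rw [Nat.not_even_iff_odd] at hodd
    have h1 : ((Fintype.card F : ZMod 3)) ^ Module.finrank F ↥K = 1 := by
      have := (ZMod.natCast_eq_natCast_iff _ _ 3).mpr hmod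
      rw [hcardK] at this
      push_cast at this
      exact this
    have h2 : ((Fintype.card F : ℕ) : ZMod 3) = 2 := by
      have := (ZMod.natCast_mod (Fintype.card F) 3).symm
      rw [hcard] at this
      exact this.trans (by norm_num)
    obtain ⟨l, hl⟩ := hodd
    rw [h2, hl, pow_succ, pow_mul] at h1
    have h4 : ((2:ZMod 3))^2 = 1 := by decide
    rw [h4, one_pow, one_mul] at h1
    exact absurd h1 (by decide)
  -- dimensions
  have hsupWK : W ⊔ K = ⊤ := by
    rw [eq_top_iff]
    intro u _
    refine Submodule.mem_sup.mpr ⟨c⁻¹ • (T *ᵥ u), W.smul_mem _ (hWmem u),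
      u - c⁻¹ • (T *ᵥ u), hdecomp u, by abel⟩
  have hinfWK : W ⊓ K = ⊥ := by
    rw [eq_bot_iff]
    rintro u ⟨h1, h2⟩
    rw [Submodule.mem_bot]
    exact hWK u h1 h2
  have hdim := Submodule.finrank_sup_add_finrank_inf_eq W K
  rw [hsupWK, hinfWK, finrank_top, finrank_bot, Module.finrank_fin_fun] at hdim
  have hWpos : 0 < Module.finrank F ↥W := by
    rw [Module.finrank_pos_iff]
    refine ⟨⟨⟨v, ?_⟩, 0, ?_⟩⟩
    · rw [hW, mem_fixSub]; exact hv
    · simp [Subtype.ext_iff, hv0]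
  have hW2 : 2 ≤ Module.finrank F ↥W := by
    obtain ⟨l, hl⟩ := heven
    omega
  -- basis of W and an order-3 automorphism supported on W
  set dW := Module.finrank F ↥W with hdW
  let b : Module.Basis (Fin dW) F ↥W := Module.finBasis F ↥W
  let i0 : Fin dW := ⟨0, by omega⟩
  let i1 : Fin dW := ⟨1, by omega⟩
  have hi01 : i0 ≠ i1 := by simp [i0, i1, Fin.ext_iff]
  set gfun : Fin dW → ↥W := fun i => if i = i0 then b i1 else if i = i1 then -b i0 - b i1 else b i
    with hgfun
  set ψ : ↥W →ₗ[F] ↥W := b.constr F gfun with hψ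
  have hψ0 : ψ (b i0) = b i1 := by rw [hψ, b.constr_basis, hgfun]; simp
  have hψ1 : ψ (b i1) = -b i0 - b i1 := by
    rw [hψ, b.constr_basis, hgfun]; simp [hi01.symm]
  have hψ3 : (ψ ∘ₗ (ψ ∘ₗ ψ)) = LinearMap.id := by
    apply b.ext
    intro i
    by_cases h0 : i = i0
    · subst h0
      simp only [LinearMap.comp_apply, LinearMap.id_apply, hψ0, hψ1, map_sub, map_neg]
      abel
    · by_cases h1 : i = i1
      · subst h1
        simp only [LinearMap.comp_apply, LinearMap.id_apply, hψ0, hψ1, map_sub, map_neg]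
        abel
      · have he : ψ (b i) = b i := by rw [hψ, b.constr_basis, hgfun]; simp [h0, h1]
        simp only [LinearMap.comp_apply, LinearMap.id_apply, he]
  -- the projection onto W
  let πW : (Fin (2*m) → F) →ₗ[F] ↥W :=
    LinearMap.codRestrict W (c⁻¹ • Matrix.mulVecLin T)
      (fun u => by
        simpa [LinearMap.smul_apply, Matrix.mulVecLin_apply] using W.smul_mem c⁻¹ (hWmem u))
  have hπW_apply : ∀ u, ((πW u : ↥W) : Fin (2*m) → F) = c⁻¹ • (T *ᵥ u) := fun u => rfl
  have hπW_W : ∀ x : ↥W, πW ↑x = x := by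
    intro x
    apply Subtype.ext
    rw [hπW_apply, hWfix _ x.2, smul_smul, inv_mul_cancel₀ hcP, one_smul]
  have hπW_K : ∀ u ∈ K, πW u = 0 := by
    intro u hu
    apply Subtype.ext
    rw [hπW_apply, (hKmem u).mp hu, smul_zero]
    rfl
  set hmap : (Fin (2*m) → F) →ₗ[F] (Fin (2*m) → F) :=
    LinearMap.id - W.subtype ∘ₗ πW + W.subtype ∘ₗ ψ ∘ₗ πW with hhmap
  have hmap_W : ∀ x : ↥W, hmap ↑x = ↑(ψ x) := by
    intro x
    rw [hhmap]
    simp only [LinearMap.add_apply, LinearMap.sub_apply, LinearMap.comp_apply,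
      LinearMap.id_apply, Submodule.coe_subtype, hπW_W x]
    abel
  have hmap_K : ∀ u ∈ K, hmap u = u := by
    intro u hu
    rw [hhmap]
    simp only [LinearMap.add_apply, LinearMap.sub_apply, LinearMap.comp_apply,
      LinearMap.id_apply, Submodule.coe_subtype, hπW_K u hu, map_zero]
    simp
  have hsplit : ∀ u : Fin (2*m) → F,
      u = ↑(πW u) + (u - c⁻¹ • (T *ᵥ u)) := by
    intro u
    rw [hπW_apply]
    abel
  have hmap3 : ∀ u, hmap (hmap (hmap u)) = u := by
    intro u
    have hk := hdecomp u
    have e1 : ∀ u' ∈ K, ∀ x : ↥W, hmap (↑x + u') = ↑(ψ x) + u' := by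
      intro u' hu' x
      rw [map_add, hmap_W, hmap_K u' hu']
    rw [hsplit u, e1 _ hk, e1 _ hk, e1 _ hk]
    have := LinearMap.congr_fun hψ3 (πW u)
    simp only [LinearMap.comp_apply, LinearMap.id_apply] at this
    rw [this]
  have hcomm : ∀ B : G, B ∈ Pm → ∀ u,
      (B : Matrix (Fin (2*m)) (Fin (2*m)) F) *ᵥ (hmap u) = hmap ((B : Matrix (Fin (2*m)) (Fin (2*m)) F) *ᵥ u) := by
    intro B hB u
    have hk := hdecomp u
    have hBk : (B : Matrix (Fin (2*m)) (Fin (2*m)) F) *ᵥ (u - c⁻¹ • (T *ᵥ u)) ∈ K := by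
      rw [hKmem, Matrix.mulVec_mulVec, hTright ⟨B, hB⟩, ← hKmem]
      exact hk
    conv_lhs => rw [hsplit u]
    conv_rhs => rw [hsplit u]
    rw [map_add, hmap_W, Matrix.mulVec_add, Matrix.mulVec_add, map_add,
      hmap_K _ hBk, hmap_K _ hk]
    have h1 : (B : Matrix (Fin (2*m)) (Fin (2*m)) F) *ᵥ ↑(ψ (πW u)) = ↑(ψ (πW u)) :=
      (ψ (πW u)).2 B hB
    have h2 : (B : Matrix (Fin (2*m)) (Fin (2*m)) F) *ᵥ ↑(πW u) = ↑(πW u) :=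
      (πW u).2 B hB
    rw [h1, h2, hmap_W]
  -- package hmap as an element of GL
  set Hm : Matrix (Fin (2*m)) (Fin (2*m)) F := LinearMap.toMatrix' hmap with hHm
  have hHmv : ∀ u, Hm *ᵥ u = hmap u := by
    intro u
    rw [hHm, ← Matrix.toLin'_apply, Matrix.toLin'_toMatrix']
  have hcomp3 : (hmap ∘ₗ (hmap ∘ₗ hmap)) = LinearMap.id := LinearMap.ext hmap3
  have hH3 : Hm * (Hm * Hm) = 1 := by
    rw [hHm, ← LinearMap.toMatrix'_comp, ← LinearMap.toMatrix'_comp, hcomp3,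
      LinearMap.toMatrix'_id]
  have hH3' : (Hm * Hm) * Hm = 1 := by
    rw [mul_assoc]
    exact hH3
  set H : G := ⟨Hm, Hm * Hm, hH3, hH3'⟩ with hHdef
  have hHval : (H : Matrix (Fin (2*m)) (Fin (2*m)) F) = Hm := rfl
  have hHcomm : ∀ B : G, B ∈ Pm → H * B = B * H := by
    intro B hB
    apply Units.ext
    rw [Units.val_mul, Units.val_mul, hHval]
    apply Matrix.toLin'.injective
    rw [Matrix.toLin'_mul, Matrix.toLin'_mul]
    apply LinearMap.ext
    intro u
    simp only [LinearMap.comp_apply, Matrix.toLin'_apply]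
    rw [hHmv, hHmv]
    exact (hcomm B hB u).symm
  have hHne : H ∉ Pm := by
    intro hH
    have hfix : (H : Matrix (Fin (2*m)) (Fin (2*m)) F) *ᵥ ↑(b i0) = ↑(b i0) := (b i0).2 H hH
    rw [hHval, hHmv, hmap_W, hψ0] at hfix
    exact hi01 ((b.injective (Subtype.coe_injective hfix)).symm)
  have hHpow : H ^ 3 = 1 := by
    apply Units.ext
    rw [Units.val_pow_eq_pow_val, hHval]
    show Hm ^ 3 = 1
    rw [pow_succ, pow_succ, pow_one, mul_assoc]
    exact hH3
  have hordH : orderOf H ∣ 3 := orderOf_dvd_of_pow_eq_one hHpow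
  have hzH : IsPGroup 3 ↥(Subgroup.zpowers H) := by
    rcases (Nat.prime_three).eq_one_or_self_of_dvd _ hordH with h | h
    · exact IsPGroup.of_card (n := 0) (by rw [Nat.card_zpowers, h, pow_zero])
    · exact IsPGroup.of_card (n := 1) (by rw [Nat.card_zpowers, h, pow_one])
  have hzle : Subgroup.zpowers H ≤ Subgroup.normalizer (Pm : Set G) := by
    rw [Subgroup.zpowers_le, Subgroup.mem_normalizer_iff]
    intro h
    constructor
    · intro hh
      rw [hHcomm h hh, mul_inv_cancel_right]
      exact hh
    · intro hx
      have h2 : h = H⁻¹ * (H * h * H⁻¹) * H := by simp [mul_assoc]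
      rw [h2, mul_assoc (H⁻¹), ← hHcomm _ hx, ← mul_assoc, inv_mul_cancel, one_mul]
      exact hx
  have hsup := IsPGroup.to_sup_of_normal_left' P₀.isPGroup' hzH hzle
  have hmax := P₀.is_maximal' hsup le_sup_left
  have hHP : H ∈ Pm := by
    have hle : Subgroup.zpowers H ≤ Pm := by
      rw [hPm, ← hmax]
      exact le_sup_right
    exact hle (Subgroup.mem_zpowers H)
  exact hHne hHP

end Key

section Main

variable {m : ℕ} {F : Type} [Field F] [Fintype F]

lemma sum_P_eq_zero (hcard : Fintype.card F % 3 = 2) (P₀ : Sylow 3 (GL (Fin (2*m)) F))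
    [Fintype ↥(P₀ : Subgroup (GL (Fin (2*m)) F))] :
    ∑ B : ↥(P₀ : Subgroup (GL (Fin (2*m)) F)),
      ((B : GL (Fin (2*m)) F) : Matrix (Fin (2*m)) (Fin (2*m)) F) = 0 := by
  classical
  set T : Matrix (Fin (2*m)) (Fin (2*m)) F :=
    ∑ B : ↥(P₀ : Subgroup (GL (Fin (2*m)) F)),
      ((B : GL (Fin (2*m)) F) : Matrix (Fin (2*m)) (Fin (2*m)) F) with hT
  have hTleft : ∀ C : ↥(P₀ : Subgroup (GL (Fin (2*m)) F)),
      ((C : GL (Fin (2*m)) F) : Matrix (Fin (2*m)) (Fin (2*m)) F) * T = T := by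
    intro C
    rw [hT, Finset.mul_sum]
    exact Fintype.sum_equiv (Equiv.mulLeft C) _ _ (fun B => by exact (Units.val_mul _ _).symm)
  have hTv : ∀ u : Fin (2*m) → F, T *ᵥ u = 0 := by
    intro u
    apply fixed_vec_eq_zero hcard P₀
    intro B hB
    rw [Matrix.mulVec_mulVec, hTleft ⟨B, hB⟩]
  ext i j
  have := congrFun (hTv (Pi.single j 1)) i
  rw [Matrix.mulVec_single] at this
  simpa using this

lemma row_fixed_eq_zero (hcard : Fintype.card F % 3 = 2) (P₀ : Sylow 3 (GL (Fin (2*m)) F))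
    (r : Fin (2*m) → F)
    (hr : ∀ B : GL (Fin (2*m)) F, B ∈ P₀ → r ᵥ* (B : Matrix (Fin (2*m)) (Fin (2*m)) F) = r) :
    r = 0 := by
  classical
  haveI : Fintype ↥(P₀ : Subgroup (GL (Fin (2*m)) F)) := Fintype.ofFinite _
  haveI : Fact (Nat.Prime 3) := ⟨by norm_num⟩
  obtain ⟨kp, hkp⟩ := (IsPGroup.iff_card (p := 3)).mp P₀.isPGroup'
  have h3F : (3:F) ≠ 0 := three_ne_zero'' hcard
  have hcP : ((Nat.card ↥(P₀ : Subgroup (GL (Fin (2*m)) F)) : F)) ≠ 0 := by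
    rw [hkp]; push_cast; exact pow_ne_zero _ h3F
  have h0 : r ᵥ* (∑ B : ↥(P₀ : Subgroup (GL (Fin (2*m)) F)),
      ((B : GL (Fin (2*m)) F) : Matrix (Fin (2*m)) (Fin (2*m)) F)) = 0 := by
    rw [sum_P_eq_zero hcard P₀, Matrix.vecMul_zero]
  rw [vecMul_sum'] at h0
  have h1 : ∀ B : ↥(P₀ : Subgroup (GL (Fin (2*m)) F)),
      r ᵥ* ((B : GL (Fin (2*m)) F) : Matrix (Fin (2*m)) (Fin (2*m)) F) = r :=
    fun B => hr _ B.2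
  rw [Finset.sum_congr rfl (fun B _ => h1 B), Finset.sum_const, Finset.card_univ,
    ← Nat.card_eq_fintype_card] at h0
  have := congrArg (fun x => (Nat.card ↥(P₀ : Subgroup (GL (Fin (2*m)) F)) : F)⁻¹ • x) h0
  simp only [smul_zero, ← Nat.cast_smul_eq_nsmul F, smul_smul, inv_mul_cancel₀ hcP, one_smul] at this
  exact this

/-- The block-diagonal embedding as an element of `GL (2m+1)`. -/
def ιu (a : Fˣ) (B : GL (Fin (2*m)) F) : GL (Fin (2*m+1)) F :=
  ⟨embMat m F (a : F) (B : Matrix (Fin (2*m)) (Fin (2*m)) F),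
   embMat m F ((a⁻¹ : Fˣ) : F) ((B⁻¹ : GL (Fin (2*m)) F) : Matrix (Fin (2*m)) (Fin (2*m)) F),
   by rw [EmbAux.emb_mul, ← Units.val_mul, ← Units.val_mul, mul_inv_cancel, mul_inv_cancel,
        Units.val_one, Units.val_one, EmbAux.emb_one],
   by rw [EmbAux.emb_mul, ← Units.val_mul, ← Units.val_mul, inv_mul_cancel, inv_mul_cancel,
        Units.val_one, Units.val_one, EmbAux.emb_one]⟩

@[simp] lemma ιu_val (a : Fˣ) (B : GL (Fin (2*m)) F) :
    ((ιu a B : GL (Fin (2*m+1)) F) : Matrix (Fin (2*m+1)) (Fin (2*m+1)) F)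
      = embMat m F (a : F) (B : Matrix (Fin (2*m)) (Fin (2*m)) F) := rfl

lemma block_eq {M : Matrix (Fin (2*m+1)) (Fin (2*m+1)) F}
    {X C : Matrix (Fin (2*m)) (Fin (2*m)) F}
    (h : M * embMat m F 1 X = embMat m F 1 C * M) :
    ((fun j => M 0 j.succ) ᵥ* X = fun j => M 0 j.succ)
    ∧ (C *ᵥ (fun i => M i.succ 0) = fun i => M i.succ 0)
    ∧ (Matrix.of (fun i j => M i.succ j.succ) * X
        = C * Matrix.of (fun i j => M i.succ j.succ)) := by
  refine ⟨funext fun j => ?_, funext fun i => ?_, ?_⟩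
  · have h1 := congrFun (congrFun h 0) j.succ
    simp only [Matrix.mul_apply, Fin.sum_univ_succ, EmbAux.emb00, EmbAux.emb0s, EmbAux.embs0,
      EmbAux.embss, mul_zero, zero_mul, mul_one, one_mul, zero_add, add_zero,
      Finset.sum_const_zero] at h1
    simpa [Matrix.vecMul, dotProduct] using h1
  · have h1 := congrFun (congrFun h i.succ) 0
    simp only [Matrix.mul_apply, Fin.sum_univ_succ, EmbAux.emb00, EmbAux.emb0s, EmbAux.embs0,
      EmbAux.embss, mul_zero, zero_mul, mul_one, one_mul, zero_add, add_zero,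
      Finset.sum_const_zero] at h1
    simpa [Matrix.mulVec, dotProduct] using h1.symm
  · ext i j
    have h1 := congrFun (congrFun h i.succ) j.succ
    simp only [Matrix.mul_apply, Fin.sum_univ_succ, EmbAux.emb00, EmbAux.emb0s, EmbAux.embs0,
      EmbAux.embss, mul_zero, zero_mul, mul_one, one_mul, zero_add, add_zero,
      Finset.sum_const_zero] at h1
    simpa [Matrix.mul_apply] using h1

end Main
section Norm

variable {m : ℕ} {F : Type} [Field F] [Fintype F]

lemma normalizer_char (hcard : Fintype.card F % 3 = 2)
    (P₀ : Sylow 3 (GL (Fin (2*m)) F))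
    (P : Subgroup (GL (Fin (2*m+1)) F))
    (hP : ∀ A : GL (Fin (2 * m + 1)) F, A ∈ P ↔
      ∃ B : GL (Fin (2 * m)) F, B ∈ P₀ ∧
        (A : Matrix (Fin (2 * m + 1)) (Fin (2 * m + 1)) F) =
          embMat m F 1 (B : Matrix (Fin (2 * m)) (Fin (2 * m)) F)) :
    ∀ A : GL (Fin (2 * m + 1)) F, A ∈ (Subgroup.normalizer (P : Set (GL (Fin (2 * m + 1)) F))) ↔
      ∃ (a : Fˣ) (B : GL (Fin (2 * m)) F),
        B ∈ (Subgroup.normalizer ((P₀ : Subgroup (GL (Fin (2 * m)) F)) : Set (GL (Fin (2 * m)) F))) ∧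
        (A : Matrix (Fin (2 * m + 1)) (Fin (2 * m + 1)) F) =
          embMat m F (a : F) (B : Matrix (Fin (2 * m)) (Fin (2 * m)) F) := by
  intro A
  constructor
  · intro hA
    have hAiff := Subgroup.mem_normalizer_iff.mp hA
    have key : ∀ B : GL (Fin (2*m)) F, B ∈ P₀ → ∃ C : GL (Fin (2*m)) F, C ∈ P₀ ∧
        (A : Matrix (Fin (2*m+1)) (Fin (2*m+1)) F) * embMat m F 1 (B : Matrix (Fin (2*m)) (Fin (2*m)) F)
          = embMat m F 1 (C : Matrix (Fin (2*m)) (Fin (2*m)) F) * (A : Matrix (Fin (2*m+1)) (Fin (2*m+1)) F) := by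
      intro B hB
      have hmem : ιu 1 B ∈ P := (hP _).mpr ⟨B, hB, by rw [ιu_val, Units.val_one]⟩
      have h2 : A * ιu 1 B * A⁻¹ ∈ P := (hAiff _).mp hmem
      obtain ⟨C, hC, hval⟩ := (hP _).mp h2
      refine ⟨C, hC, ?_⟩
      have e1 : A * ιu 1 B = (A * ιu 1 B * A⁻¹) * A := by group
      have e2 : ((A * ιu 1 B : GL (Fin (2*m+1)) F) : Matrix (Fin (2*m+1)) (Fin (2*m+1)) F)
          = embMat m F 1 (C : Matrix (Fin (2*m)) (Fin (2*m)) F) * (A : Matrix (Fin (2*m+1)) (Fin (2*m+1)) F) := by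
        conv_lhs => rw [e1]
        rw [Units.val_mul, hval]
      rw [Units.val_mul, ιu_val, Units.val_one] at e2
      exact e2
    have key' : ∀ C : GL (Fin (2*m)) F, C ∈ P₀ → ∃ B : GL (Fin (2*m)) F, B ∈ P₀ ∧
        (A : Matrix (Fin (2*m+1)) (Fin (2*m+1)) F) * embMat m F 1 (B : Matrix (Fin (2*m)) (Fin (2*m)) F)
          = embMat m F 1 (C : Matrix (Fin (2*m)) (Fin (2*m)) F) * (A : Matrix (Fin (2*m+1)) (Fin (2*m+1)) F) := by
      intro C hC
      have hmem : ιu 1 C ∈ P := (hP _).mpr ⟨C, hC, by rw [ιu_val, Units.val_one]⟩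
      have hAinv : A⁻¹ ∈ (Subgroup.normalizer (P : Set (GL (Fin (2 * m + 1)) F))) := (Subgroup.normalizer (P : Set (GL (Fin (2 * m + 1)) F))).inv_mem hA
      have h2 : A⁻¹ * ιu 1 C * (A⁻¹)⁻¹ ∈ P := (Subgroup.mem_normalizer_iff.mp hAinv _).mp hmem
      rw [inv_inv] at h2
      obtain ⟨B, hB, hval⟩ := (hP _).mp h2
      refine ⟨B, hB, ?_⟩
      have e1 : A * (A⁻¹ * ιu 1 C * A) = ιu 1 C * A := by group
      have e2 : (A : Matrix (Fin (2*m+1)) (Fin (2*m+1)) F) * embMat m F 1 (B : Matrix (Fin (2*m)) (Fin (2*m)) F)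
          = ((ιu 1 C * A : GL (Fin (2*m+1)) F) : Matrix (Fin (2*m+1)) (Fin (2*m+1)) F) := by
        rw [← hval, ← Units.val_mul, e1]
      rw [Units.val_mul, ιu_val, Units.val_one] at e2
      exact e2
    have hr : (fun j => (A : Matrix (Fin (2*m+1)) (Fin (2*m+1)) F) 0 j.succ) = (0 : Fin (2*m) → F) := by
      apply row_fixed_eq_zero hcard P₀
      intro B hB
      obtain ⟨C, hC, he⟩ := key B hB
      exact (block_eq he).1
    have hcv : (fun i => (A : Matrix (Fin (2*m+1)) (Fin (2*m+1)) F) i.succ 0) = (0 : Fin (2*m) → F) := by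
      apply fixed_vec_eq_zero hcard P₀
      intro C hC
      obtain ⟨B, hB, he⟩ := key' C hC
      exact (block_eq he).2.1
    have hr' : ∀ j : Fin (2*m), (A : Matrix (Fin (2*m+1)) (Fin (2*m+1)) F) 0 j.succ = 0 := fun j => congrFun hr j
    have hcv' : ∀ i : Fin (2*m), (A : Matrix (Fin (2*m+1)) (Fin (2*m+1)) F) i.succ 0 = 0 := fun i => congrFun hcv i
    set M : Matrix (Fin (2*m+1)) (Fin (2*m+1)) F := (A : Matrix (Fin (2*m+1)) (Fin (2*m+1)) F) with hM
    set N : Matrix (Fin (2*m+1)) (Fin (2*m+1)) F := ((A⁻¹ : GL (Fin (2*m+1)) F) : Matrix (Fin (2*m+1)) (Fin (2*m+1)) F) with hN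
    have hAN : M * N = 1 := by rw [hM, hN, ← Units.val_mul, mul_inv_cancel, Units.val_one]
    have hNA : N * M = 1 := by rw [hM, hN, ← Units.val_mul, inv_mul_cancel, Units.val_one]
    set D : Matrix (Fin (2*m)) (Fin (2*m)) F := Matrix.of (fun i j => M i.succ j.succ) with hD
    set D' : Matrix (Fin (2*m)) (Fin (2*m)) F := Matrix.of (fun i j => N i.succ j.succ) with hD'
    have haa' : M 0 0 * N 0 0 = 1 := by
      have h1 := congrFun (congrFun hAN 0) 0
      simp only [Matrix.mul_apply, Fin.sum_univ_succ, Matrix.one_apply] at h1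
      simpa [hr'] using h1
    have ha'a : N 0 0 * M 0 0 = 1 := by
      have h1 := congrFun (congrFun hNA 0) 0
      simp only [Matrix.mul_apply, Fin.sum_univ_succ, Matrix.one_apply] at h1
      simpa [hcv'] using h1
    have hDD' : D * D' = 1 := by
      ext i j
      have h1 := congrFun (congrFun hAN i.succ) j.succ
      simp only [Matrix.mul_apply, Fin.sum_univ_succ, Matrix.one_apply] at h1
      simp only [Matrix.mul_apply, Matrix.one_apply, hD, hD', Matrix.of_apply]
      simpa [hcv', Fin.succ_inj] using h1
    have hD'D : D' * D = 1 := by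
      ext i j
      have h1 := congrFun (congrFun hNA i.succ) j.succ
      simp only [Matrix.mul_apply, Fin.sum_univ_succ, Matrix.one_apply] at h1
      simp only [Matrix.mul_apply, Matrix.one_apply, hD, hD', Matrix.of_apply]
      simpa [hr', Fin.succ_inj] using h1
    set au : Fˣ := ⟨M 0 0, N 0 0, haa', ha'a⟩ with hau
    set Du : GL (Fin (2*m)) F := ⟨D, D', hDD', hD'D⟩ with hDu
    have hDnorm : Du ∈ (Subgroup.normalizer ((P₀ : Subgroup (GL (Fin (2*m)) F)) : Set (GL (Fin (2*m)) F))) := by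
      rw [Subgroup.mem_normalizer_iff]
      intro h
      constructor
      · intro hh
        obtain ⟨C, hC, he⟩ := key h hh
        have hDB : Du * h = C * Du := by
          apply Units.ext
          rw [Units.val_mul, Units.val_mul]
          exact (block_eq he).2.2
        have hconj : Du * h * Du⁻¹ = C := by
          rw [hDB, mul_assoc, mul_inv_cancel, mul_one]
        rw [hconj]
        exact hC
      · intro hx
        obtain ⟨B, hB, he⟩ := key' (Du * h * Du⁻¹) hx
        have hDB : Du * B = (Du * h * Du⁻¹) * Du := by
          apply Units.ext
          rw [Units.val_mul, Units.val_mul]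
          exact (block_eq he).2.2
        have hBh : B = h := by
          apply mul_left_cancel (a := Du)
          rw [hDB]
          group
        rw [← hBh]
        exact hB
    refine ⟨au, Du, hDnorm, ?_⟩
    ext i j
    refine Fin.cases ?_ (fun i' => ?_) i
    · refine Fin.cases ?_ (fun j' => ?_) j
      · rfl
      · rw [EmbAux.emb0s]; exact hr' j'
    · refine Fin.cases ?_ (fun j' => ?_) j
      · rw [EmbAux.embs0]; exact hcv' i'
      · rfl
  · rintro ⟨a, B, hBn, hval⟩
    have hAeq : A = ιu a B := Units.ext (by rw [hval, ιu_val])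
    have hAinv : ((A⁻¹ : GL (Fin (2*m+1)) F) : Matrix (Fin (2*m+1)) (Fin (2*m+1)) F)
        = embMat m F ((a⁻¹ : Fˣ) : F) ((B⁻¹ : GL (Fin (2*m)) F) : Matrix (Fin (2*m)) (Fin (2*m)) F) := by
      rw [hAeq]; rfl
    rw [Subgroup.mem_normalizer_iff]
    intro h
    constructor
    · intro hh
      obtain ⟨Bh, hBh, hhv⟩ := (hP h).mp hh
      refine (hP _).mpr ⟨B * Bh * B⁻¹, (Subgroup.mem_normalizer_iff.mp hBn Bh).mp hBh, ?_⟩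
      rw [Units.val_mul, Units.val_mul, hval, hhv, hAinv, EmbAux.emb_mul, EmbAux.emb_mul]
      rw [Units.val_mul, Units.val_mul]
      congr 1
      rw [mul_one, ← Units.val_mul, mul_inv_cancel, Units.val_one]
    · intro hx
      obtain ⟨C, hC, hCv⟩ := (hP _).mp hx
      have hh : h = A⁻¹ * (A * h * A⁻¹) * A := by group
      have hmem : B⁻¹ * C * B ∈ P₀ := by
        have h2 := (Subgroup.mem_normalizer_iff.mp ((Subgroup.normalizer ((P₀ : Subgroup (GL (Fin (2*m)) F)) : Set (GL (Fin (2*m)) F))).inv_mem hBn) C).mp hC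
        rwa [inv_inv] at h2
      refine (hP h).mpr ⟨B⁻¹ * C * B, hmem, ?_⟩
      rw [hh, Units.val_mul, Units.val_mul, hAinv, hCv, hval, EmbAux.emb_mul, EmbAux.emb_mul]
      rw [Units.val_mul, Units.val_mul]
      congr 1
      rw [mul_one, ← Units.val_mul, inv_mul_cancel, Units.val_one]

end Norm
/-- final -/
theorem sylow_normalizer_GL_odd (m q : ℕ) (hm : 1 ≤ m) (hq : IsPrimePow q)
    (h3 : 3 ∣ q + 1) (F : Type) [Field F] [Fintype F] (hF : Fintype.card F = q)
    (P₀ : Sylow 3 (GL (Fin (2 * m)) F))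
    (P : Subgroup (GL (Fin (2 * m + 1)) F))
    (hP : ∀ A : GL (Fin (2 * m + 1)) F, A ∈ P ↔
      ∃ B : GL (Fin (2 * m)) F, B ∈ P₀ ∧
        (A : Matrix (Fin (2 * m + 1)) (Fin (2 * m + 1)) F) =
          embMat m F 1 (B : Matrix (Fin (2 * m)) (Fin (2 * m)) F)) :
    (∃ S : Sylow 3 (GL (Fin (2 * m + 1)) F), (S : Subgroup (GL (Fin (2 * m + 1)) F)) = P) ∧
    (∀ A : GL (Fin (2 * m + 1)) F, A ∈ Subgroup.normalizer (P : Set (GL (Fin (2 * m + 1)) F)) ↔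
      ∃ (a : Fˣ) (B : GL (Fin (2 * m)) F),
        B ∈ Subgroup.normalizer ((P₀ : Subgroup (GL (Fin (2 * m)) F)) : Set (GL (Fin (2 * m)) F)) ∧
        (A : Matrix (Fin (2 * m + 1)) (Fin (2 * m + 1)) F) =
          embMat m F (a : F) (B : Matrix (Fin (2 * m)) (Fin (2 * m)) F)) := by
  have hq2 : q % 3 = 2 := by obtain ⟨t, ht⟩ := h3; omega
  have hcard : Fintype.card F % 3 = 2 := by rw [hF]; exact hq2
  have hnorm := normalizer_char hcard P₀ P hP
  refine ⟨?_, hnorm⟩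
  have hPpg : IsPGroup 3 P := by
    intro g
    obtain ⟨B, hB, hval⟩ := (hP ↑g).mp g.2
    obtain ⟨k, hk⟩ := P₀.isPGroup' ⟨B, hB⟩
    refine ⟨k, ?_⟩
    have hBk : (B : GL (Fin (2*m)) F) ^ 3 ^ k = 1 := by
      have h := congrArg Subtype.val hk
      rwa [Subgroup.coe_pow, OneMemClass.coe_one] at h
    have hgk : (g : GL (Fin (2*m+1)) F) ^ 3 ^ k = 1 := by
      apply Units.ext
      rw [Units.val_pow_eq_pow_val, hval, EmbAux.emb_pow, one_pow,
        ← Units.val_pow_eq_pow_val, hBk, Units.val_one, EmbAux.emb_one, Units.val_one]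
    exact Subtype.ext (by rw [Subgroup.coe_pow, OneMemClass.coe_one]; exact hgk)
  refine ⟨⟨P, hPpg, ?_⟩, rfl⟩
  intro Q hQ hle
  by_contra hne
  haveI : Finite ↥Q := Subtype.finite
  haveI : Group.IsNilpotent ↥Q := hQ.isNilpotent
  have hnc : NormalizerCondition ↥Q := normalizerCondition_of_isNilpotent
  set P' : Subgroup ↥Q := P.subgroupOf Q with hP'
  have hP'top : P' ≠ ⊤ := by
    intro h
    exact hne (le_antisymm (Subgroup.subgroupOf_eq_top.mp h) hle)
  have hlt' : P' < (Subgroup.normalizer (P' : Set ↥Q)) := hnc P' (lt_top_iff_ne_top.mpr hP'top)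
  obtain ⟨g, hgnorm, hgP'⟩ := SetLike.exists_of_lt hlt'
  have hgQ : (g : GL (Fin (2*m+1)) F) ∈ Q := g.2
  have hgnormP : (g : GL (Fin (2*m+1)) F) ∈ (Subgroup.normalizer (P : Set (GL (Fin (2 * m + 1)) F))) := by
    rw [Subgroup.mem_normalizer_iff]
    intro h
    constructor
    · intro hh
      have hhQ : h ∈ Q := hle hh
      have h1 : (⟨h, hhQ⟩ : ↥Q) ∈ P' := Subgroup.mem_subgroupOf.mpr hh
      have h2 := (Subgroup.mem_normalizer_iff.mp hgnorm _).mp h1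
      have h3' := Subgroup.mem_subgroupOf.mp h2
      simpa using h3'
    · intro hx
      have hxQ : ((g : GL (Fin (2*m+1)) F) * h * (g : GL (Fin (2*m+1)) F)⁻¹) ∈ Q := hle hx
      have hhQ : h ∈ Q := by
        have he : h = (g : GL (Fin (2*m+1)) F)⁻¹
            * ((g : GL (Fin (2*m+1)) F) * h * (g : GL (Fin (2*m+1)) F)⁻¹)
            * (g : GL (Fin (2*m+1)) F) := by group
        rw [he]
        exact Q.mul_mem (Q.mul_mem (Q.inv_mem hgQ) hxQ) hgQ
      have hmem' : (⟨_, hxQ⟩ : ↥Q) ∈ P' := Subgroup.mem_subgroupOf.mpr hx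
      have heq : (⟨_, hxQ⟩ : ↥Q) = g * ⟨h, hhQ⟩ * g⁻¹ := by
        apply Subtype.ext
        simp
      rw [heq] at hmem'
      have h2 := (Subgroup.mem_normalizer_iff.mp hgnorm _).mpr hmem'
      exact Subgroup.mem_subgroupOf.mp h2
  obtain ⟨a, B, hBn, hval⟩ := (hnorm _).mp hgnormP
  obtain ⟨k, hk⟩ := hQ g
  have hgk : ((g : GL (Fin (2*m+1)) F)) ^ 3 ^ k = 1 := by
    have h := congrArg Subtype.val hk
    rwa [Subgroup.coe_pow, OneMemClass.coe_one] at h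
  have hmk : (embMat m F (a : F) ((B : GL (Fin (2*m)) F) : Matrix (Fin (2*m)) (Fin (2*m)) F)) ^ 3 ^ k
      = embMat m F 1 1 := by
    rw [← hval, ← Units.val_pow_eq_pow_val, hgk, Units.val_one, EmbAux.emb_one]
  rw [EmbAux.emb_pow] at hmk
  obtain ⟨hapow, hBpow⟩ := EmbAux.emb_inj hmk
  have haU : a ^ 3 ^ k = 1 := Units.ext (by rw [Units.val_pow_eq_pow_val]; exact hapow)
  have hq1 : ¬ (3 ∣ q - 1) := by
    have h2q : 2 ≤ q := hq.two_le
    obtain ⟨t, ht⟩ := h3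
    omega
  have hord : orderOf a ∣ 3 ^ k := orderOf_dvd_of_pow_eq_one haU
  have hord2 : orderOf a ∣ q - 1 := by
    have h := orderOf_dvd_card (x := a)
    rwa [Fintype.card_units, hF] at h
  have ha1 : a = 1 := by
    rw [← orderOf_eq_one_iff]
    have hco : Nat.Coprime (3 ^ k) (q - 1) :=
      Nat.Coprime.pow_left k ((Nat.prime_three).coprime_iff_not_dvd.mpr hq1)
    exact Nat.dvd_one.mp (hco ▸ Nat.dvd_gcd hord hord2)
  have hBk : B ^ 3 ^ k = 1 := Units.ext (by rw [Units.val_pow_eq_pow_val, hBpow, Units.val_one])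
  haveI : Fact (Nat.Prime 3) := ⟨by norm_num⟩
  have hzB : IsPGroup 3 ↥(Subgroup.zpowers B) := by
    obtain ⟨j, hj, hoj⟩ := (Nat.dvd_prime_pow Nat.prime_three).mp (orderOf_dvd_of_pow_eq_one hBk)
    exact IsPGroup.of_card (n := j) (by rw [Nat.card_zpowers, hoj])
  have hzle : Subgroup.zpowers B ≤ (Subgroup.normalizer ((P₀ : Subgroup (GL (Fin (2*m)) F)) : Set (GL (Fin (2*m)) F))) :=
    Subgroup.zpowers_le.mpr hBn
  have hsup := IsPGroup.to_sup_of_normal_left' P₀.isPGroup' hzB hzle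
  have hmax := P₀.is_maximal' hsup le_sup_left
  have hBP : B ∈ P₀ := by
    have hle2 : Subgroup.zpowers B ≤ (P₀ : Subgroup (GL (Fin (2*m)) F)) := by
      rw [← hmax]
      exact le_sup_right
    exact hle2 (Subgroup.mem_zpowers B)
  have hgP : (g : GL (Fin (2*m+1)) F) ∈ P :=
    (hP _).mpr ⟨B, hBP, by rw [hval, ha1, Units.val_one]⟩
  exact hgP' (Subgroup.mem_subgroupOf.mpr hgP)
end
end

section
/- Let p be a prime, K a finite group with Q a Sylow p-subgroup of K, and m ≥ 1. Let H = K ≀ S_m be the wreath product, realized as the semidirect product of K^m (functions from {1,…,m} to K) by S_m acting by permuting coordinates, and write elements of H as (x₁,…,x_m; z) with x_i ∈ K, z ∈ S_m. Let R be a Sylow p-subgroup of S_m and let P = Q ≀ R = {(x₁,…,x_m; z) : each x_i ∈ Q, z ∈ R}. Then P is a Sylow p-subgroup of H, and the normalizer of P in H equals { (x₁,…,x_m; z) : each x_i ∈ N_K(Q), z ∈ N_{S_m}(R), and x_i⁻¹x_j ∈ Q whenever i and j lie in the same R-orbit on {1,…,m} }. -/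
open scoped Classical

noncomputable section

/-- The permutation action of `S_m` on the direct power `K^m`, as a homomorphism into the
automorphism group; this is the action used to form the wreath product `K ≀ S_m`. -/
def wreathAction (m : ℕ) (K : Type) [Group K] :
    Equiv.Perm (Fin m) →* MulAut (Fin m → K) where
  toFun σ :=
    { toFun := fun f => f ∘ σ.symm
      invFun := fun f => f ∘ σ
      left_inv := fun f => by funext i; simp
      right_inv := fun f => by funext i; simp
      map_mul' := fun f g => rfl }
  map_one' := by ext f i; rfl
  map_mul' σ τ := by ext f i; rfl

/-- The wreath product `K ≀ S_m`, realized as the semidirect product of `K^m` by `S_m`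
permuting the coordinates. -/
abbrev WreathProductSymm (K : Type) [Group K] (m : ℕ) : Type :=
  SemidirectProduct (Fin m → K) (Equiv.Perm (Fin m)) (wreathAction m K)

section Aux

variable {K : Type} [Group K] {m : ℕ}

lemma WreathProductSymm.conj_right (g h : WreathProductSymm K m) :
    (g * h * g⁻¹).right = g.right * h.right * g.right⁻¹ := rfl

lemma WreathProductSymm.conj_left (g h : WreathProductSymm K m) (i : Fin m) :
    (g * h * g⁻¹).left i =
      g.left i * h.left (g.right⁻¹ i) *
        (g.left ((g.right * h.right * g.right⁻¹)⁻¹ i))⁻¹ := rfl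

lemma WreathProductSymm.inv_left' (g : WreathProductSymm K m) (i : Fin m) :
    g⁻¹.left i = (g.left (g.right i))⁻¹ := rfl

open WreathProductSymm in
/-- If `g` satisfies the three normalizer conditions, then it conjugates `P = Q ≀ R` into
itself. -/
lemma WreathProductSymm.conj_mem_aux {Q : Subgroup K} {R : Subgroup (Equiv.Perm (Fin m))}
    {P : Subgroup (WreathProductSymm K m)}
    (hP : ∀ g : WreathProductSymm K m,
      g ∈ P ↔ (∀ i : Fin m, g.left i ∈ Q) ∧ g.right ∈ R)
    {g : WreathProductSymm K m}
    (h1 : ∀ i, g.left i ∈ Subgroup.normalizer (Q : Set K))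
    (h2 : g.right ∈ Subgroup.normalizer (R : Set (Equiv.Perm (Fin m))))
    (h3 : ∀ i j : Fin m, (∃ r ∈ R, r i = j) → (g.left i)⁻¹ * g.left j ∈ Q)
    {h : WreathProductSymm K m} (hh : h ∈ P) : g * h * g⁻¹ ∈ P := by
  obtain ⟨hhl, hhr⟩ := (hP h).1 hh
  have hρR : g.right * h.right * g.right⁻¹ ∈ R :=
    (Subgroup.mem_normalizer_iff.1 h2 h.right).1 hhr
  refine (hP _).2 ⟨fun i => ?_, by rw [conj_right]; exact hρR⟩
  rw [conj_left]
  set x := g.left i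
  set y := g.left ((g.right * h.right * g.right⁻¹)⁻¹ i) with hy
  have hij : x⁻¹ * y ∈ Q :=
    h3 i _ ⟨(g.right * h.right * g.right⁻¹)⁻¹, inv_mem hρR, rfl⟩
  have t1 : x * h.left (g.right⁻¹ i) * x⁻¹ ∈ Q :=
    (Subgroup.mem_normalizer_iff.1 (h1 i) _).1 (hhl _)
  have t2 : x * y⁻¹ ∈ Q := by
    have := (Subgroup.mem_normalizer_iff.1 (h1 i) _).1 (inv_mem hij)
    simpa [mul_inv_rev, mul_assoc, x] using this
  have := mul_mem t1 t2
  simpa [mul_assoc] using this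

open WreathProductSymm in
/-- The three normalizer conditions are stable under inversion. -/
lemma WreathProductSymm.inv_cond {Q : Subgroup K} {R : Subgroup (Equiv.Perm (Fin m))}
    {g : WreathProductSymm K m}
    (h1 : ∀ i, g.left i ∈ Subgroup.normalizer (Q : Set K))
    (h2 : g.right ∈ Subgroup.normalizer (R : Set (Equiv.Perm (Fin m))))
    (h3 : ∀ i j : Fin m, (∃ r ∈ R, r i = j) → (g.left i)⁻¹ * g.left j ∈ Q) :
    (∀ i, g⁻¹.left i ∈ Subgroup.normalizer (Q : Set K)) ∧ g⁻¹.right ∈ Subgroup.normalizer (R : Set (Equiv.Perm (Fin m))) ∧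
    (∀ i j : Fin m, (∃ r ∈ R, r i = j) → (g⁻¹.left i)⁻¹ * g⁻¹.left j ∈ Q) := by
  refine ⟨fun i => by rw [inv_left']; exact inv_mem (h1 _), inv_mem h2, ?_⟩
  rintro i j ⟨r, hr, rfl⟩
  rw [inv_left', inv_left', inv_inv]
  set i' := g.right i
  have hr' : g.right * r * g.right⁻¹ ∈ R := (Subgroup.mem_normalizer_iff.1 h2 r).1 hr
  have key : (g.left i')⁻¹ * g.left (g.right (r i)) ∈ Q := by
    refine h3 i' _ ⟨g.right * r * g.right⁻¹, hr', ?_⟩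
    show g.right (r (g.right⁻¹ i')) = _
    simp [i']
  have := (Subgroup.mem_normalizer_iff.1 (h1 i') _).1 (inv_mem key)
  simpa [mul_inv_rev, mul_assoc] using this

open SemidirectProduct WreathProductSymm in
/-- Any element of the normalizer of `P = Q ≀ R` satisfies the three conditions. -/
lemma WreathProductSymm.normalizer_cond {Q : Subgroup K} {R : Subgroup (Equiv.Perm (Fin m))}
    {P : Subgroup (WreathProductSymm K m)}
    (hP : ∀ g : WreathProductSymm K m,
      g ∈ P ↔ (∀ i : Fin m, g.left i ∈ Q) ∧ g.right ∈ R)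
    {g : WreathProductSymm K m} (hg : g ∈ Subgroup.normalizer (P : Set (WreathProductSymm K m))) :
    (∀ i, g.left i ∈ Subgroup.normalizer (Q : Set K)) ∧ g.right ∈ Subgroup.normalizer (R : Set (Equiv.Perm (Fin m))) ∧
    (∀ i j : Fin m, (∃ r ∈ R, r i = j) → (g.left i)⁻¹ * g.left j ∈ Q) := by
  have hmem := Subgroup.mem_normalizer_iff.1 hg
  have hginv := Subgroup.mem_normalizer_iff.1 (inv_mem hg)
  have hfwd : ∀ (k : Fin m) (q : K), q ∈ Q → g.left k * q * (g.left k)⁻¹ ∈ Q := by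
    intro k q hq
    have h1 : (inl (fun _ => q) : WreathProductSymm K m) ∈ P :=
      (hP _).2 ⟨fun i => by simpa using hq, by simp [one_mem]⟩
    have h2 := ((hP _).1 ((hmem _).1 h1)).1 k
    rw [conj_left] at h2
    simpa using h2
  have hbwd : ∀ (k : Fin m) (q : K), q ∈ Q → (g.left k)⁻¹ * q * g.left k ∈ Q := by
    intro k q hq
    have h1 : (inl (fun _ => q) : WreathProductSymm K m) ∈ P :=
      (hP _).2 ⟨fun i => by simpa using hq, by simp [one_mem]⟩
    have h2 := ((hP _).1 ((hginv _).1 h1)).1 (g.right⁻¹ k)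
    rw [conj_left] at h2
    simpa [inv_left'] using h2
  have hNf : ∀ k, g.left k ∈ Subgroup.normalizer (Q : Set K) := by
    intro k
    rw [Subgroup.mem_normalizer_iff]
    intro q
    refine ⟨fun hq => hfwd k q hq, fun hq => ?_⟩
    have := hbwd k _ hq
    simpa [mul_assoc] using this
  have hNσ : g.right ∈ Subgroup.normalizer (R : Set (Equiv.Perm (Fin m))) := by
    rw [Subgroup.mem_normalizer_iff]
    intro τ
    constructor
    · intro hτ
      have h1 : (inr τ : WreathProductSymm K m) ∈ P :=
        (hP _).2 ⟨fun i => by simp [one_mem], by simpa using hτ⟩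
      have h2 := ((hP _).1 ((hmem _).1 h1)).2
      rw [conj_right] at h2
      simpa using h2
    · intro hτ
      have h1 : (inr (g.right * τ * g.right⁻¹) : WreathProductSymm K m) ∈ P :=
        (hP _).2 ⟨fun i => by simp [one_mem], by simpa using hτ⟩
      have h2 := ((hP _).1 ((hginv _).1 h1)).2
      rw [conj_right] at h2
      simpa [mul_assoc] using h2
  refine ⟨hNf, hNσ, ?_⟩
  rintro i j ⟨r, hr, rfl⟩
  have hτ : g.right⁻¹ * r⁻¹ * g.right ∈ R := by
    have := (Subgroup.mem_normalizer_iff.1 (inv_mem hNσ) r⁻¹).1 (inv_mem hr)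
    simpa using this
  have h1 : (inr (g.right⁻¹ * r⁻¹ * g.right) : WreathProductSymm K m) ∈ P :=
    (hP _).2 ⟨fun i => by simp [one_mem], by simpa using hτ⟩
  have h2 := ((hP _).1 ((hmem _).1 h1)).1 i
  rw [conj_left] at h2
  have hperm : (g.right * (inr (g.right⁻¹ * r⁻¹ * g.right) :
      WreathProductSymm K m).right * g.right⁻¹)⁻¹ = r := by
    simp only [SemidirectProduct.right_inr]
    group
  rw [hperm] at h2
  simp only [SemidirectProduct.left_inr, Pi.one_apply, mul_one] at h2
  have := hbwd i _ (inv_mem h2)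
  simpa [mul_assoc] using this

end Aux

/-- Let `p` be a prime, `K` a finite group with `Q` a Sylow `p`-subgroup, `m ≥ 1`, and
`H = K ≀ S_m`.  Let `R` be a Sylow `p`-subgroup of `S_m` and let
`P = Q ≀ R = {(x₁,…,x_m; z) | xᵢ ∈ Q, z ∈ R}`.  Then `P` is a Sylow `p`-subgroup of `H`,
and `N_H(P)` consists exactly of the elements `(x₁,…,x_m; z)` with `xᵢ ∈ N_K(Q)`,
`z ∈ N_{S_m}(R)`, and `xᵢ⁻¹ xⱼ ∈ Q` whenever `i` and `j` lie in the same `R`-orbit. -/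
theorem wreath_sylow_normalizer (p : ℕ) (hp : p.Prime) (K : Type) [Group K] [Fintype K]
    (Q : Sylow p K) (m : ℕ) (hm : 1 ≤ m) (R : Sylow p (Equiv.Perm (Fin m)))
    (P : Subgroup (WreathProductSymm K m))
    (hP : ∀ g : WreathProductSymm K m,
      g ∈ P ↔ (∀ i : Fin m, g.left i ∈ Q) ∧ g.right ∈ R) :
    (∃ S : Sylow p (WreathProductSymm K m), (S : Subgroup (WreathProductSymm K m)) = P) ∧
    (∀ g : WreathProductSymm K m, g ∈ Subgroup.normalizer (P : Set (WreathProductSymm K m)) ↔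
      (∀ i : Fin m, g.left i ∈ Subgroup.normalizer ((Q : Subgroup K) : Set K)) ∧
      g.right ∈ Subgroup.normalizer ((R : Subgroup (Equiv.Perm (Fin m))) : Set (Equiv.Perm (Fin m))) ∧
      (∀ i j : Fin m, (∃ r ∈ (R : Subgroup (Equiv.Perm (Fin m))), r i = j) →
        (g.left i)⁻¹ * g.left j ∈ Q)) := by
  haveI : Fact p.Prime := ⟨hp⟩
  constructor
  · -- `P` is a Sylow `p`-subgroup.
    let e : WreathProductSymm K m ≃ (Fin m → K) × Equiv.Perm (Fin m) :=
      ⟨fun g => (g.left, g.right), fun x => ⟨x.1, x.2⟩, fun g => rfl, fun x => rfl⟩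
    haveI : Finite (WreathProductSymm K m) := Finite.of_equiv _ e.symm
    let eP : P ≃ (Fin m → Q) × R :=
      { toFun := fun g => (fun i => ⟨g.1.left i, ((hP g.1).1 g.2).1 i⟩,
          ⟨g.1.right, ((hP g.1).1 g.2).2⟩)
        invFun := fun x => ⟨⟨fun i => (x.1 i : K), (x.2 : Equiv.Perm (Fin m))⟩,
          (hP _).2 ⟨fun i => (x.1 i).2, x.2.2⟩⟩
        left_inv := fun g => rfl
        right_inv := fun x => rfl }
    have hcP : Nat.card P = Nat.card Q ^ m * Nat.card R := by
      rw [Nat.card_congr eP, Nat.card_prod, Nat.card_fun]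
      simp
      rfl
    have hcH : Nat.card (WreathProductSymm K m) =
        Nat.card K ^ m * Nat.card (Equiv.Perm (Fin m)) := by
      rw [Nat.card_congr e, Nat.card_prod, Nat.card_fun]
      simp
    have hQc := Sylow.card_eq_multiplicity Q
    have hRc := Sylow.card_eq_multiplicity R
    have hcPpow : Nat.card P =
        p ^ ((Nat.card K).factorization p * m +
          (Nat.card (Equiv.Perm (Fin m))).factorization p) := by
      rw [hcP, hQc, hRc, ← pow_mul, ← pow_add]
    have hKd : Nat.card Q * (Q : Subgroup K).index = Nat.card K :=
      Subgroup.card_mul_index _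
    have hRd : Nat.card R * (R : Subgroup (Equiv.Perm (Fin m))).index =
        Nat.card (Equiv.Perm (Fin m)) := Subgroup.card_mul_index _
    have hPd : Nat.card P * P.index = Nat.card (WreathProductSymm K m) :=
      Subgroup.card_mul_index _
    have hPindex : P.index = (Q : Subgroup K).index ^ m *
        (R : Subgroup (Equiv.Perm (Fin m))).index := by
      have h0 : Nat.card P ≠ 0 := Nat.card_pos.ne'
      apply Nat.eq_of_mul_eq_mul_left (Nat.pos_of_ne_zero h0)
      rw [hPd, hcH, ← hKd, ← hRd, hcP]
      ring
    have hndvd : ¬ p ∣ P.index := by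
      rw [hPindex]
      intro hdvd
      rcases (Nat.Prime.dvd_mul hp).1 hdvd with h | h
      · exact Q.not_dvd_index (hp.dvd_of_dvd_pow h)
      · exact R.not_dvd_index h
    exact ⟨(IsPGroup.of_card hcPpow).toSylow hndvd, IsPGroup.toSylow_coe _ _⟩
  · -- Description of the normalizer.
    intro g
    constructor
    · exact fun hg => WreathProductSymm.normalizer_cond hP hg
    · rintro ⟨h1, h2, h3⟩
      obtain ⟨hi1, hi2, hi3⟩ := WreathProductSymm.inv_cond h1 h2 h3
      rw [Subgroup.mem_normalizer_iff]
      intro h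
      constructor
      · exact fun hh => WreathProductSymm.conj_mem_aux hP h1 h2 h3 hh
      · intro hh
        have := WreathProductSymm.conj_mem_aux hP hi1 hi2 hi3 hh
        rwa [show g⁻¹ * (g * h * g⁻¹) * g⁻¹⁻¹ = h by group] at this
end
end
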